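/- Let A(t) = (A_1(t),...,A_q(t)) be a smooth one-parameter family of n×n matrices with A(0) = A, and let σ_u(t) denote the corresponding symmetric functions. Then (d/dt) σ_u(t)|_{t=0} = Σ_α tr( (d/dt) A_α(t)|_{t=0} · T_{α♭(u)}(A) ), where T_v are the generalized Newton transformations of A. -/

import Mathlib

open MvPolynomial Matrix

/-- The generalized symmetric function `σ_u(A)`: the coefficient of `t^u` in
`det(I + t₁A₁ + ⋯ + t_qA_q)`. -/
noncomputable def gsigma {n q : ℕ} (A : Fin q → Matrix (Fin n) (Fin n) ℝ)
    (u : Fin q → ℕ) : ℝ :=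
  MvPolynomial.coeff (Finsupp.equivFunOnFinite.symm u)
    ((1 + ∑ α, (MvPolynomial.X α : MvPolynomial (Fin q) ℝ) • (A α).map MvPolynomial.C).det)

/-- Auxiliary recursion (on `|u|`) for the generalized Newton transformation. -/
noncomputable def newtonAux {n q : ℕ} (A : Fin q → Matrix (Fin n) (Fin n) ℝ) :
    ℕ → (Fin q → ℕ) → Matrix (Fin n) (Fin n) ℝ
  | 0, _ => 1
  | k + 1, u =>
      gsigma A u • (1 : Matrix (Fin n) (Fin n) ℝ) -
        ∑ α, if 1 ≤ u α then A α * newtonAux A k (Function.update u α (u α - 1)) else 0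

/-- The generalized Newton transformation `T_u`, defined by `T_0 = I` and
`T_u = σ_u I - ∑_α A_α T_{α♭(u)}`. -/
noncomputable def newton {n q : ℕ} (A : Fin q → Matrix (Fin n) (Fin n) ℝ)
    (u : Fin q → ℕ) : Matrix (Fin n) (Fin n) ℝ :=
  newtonAux A (∑ i, u i) u


noncomputable section
namespace DS
variable {n q : ℕ}

/-- index conversion -/
lemma findex (u : Fin q → ℕ) (α : Fin q) :
    Finsupp.equivFunOnFinite.symm u - Finsupp.single α 1 =
      Finsupp.equivFunOnFinite.symm (Function.update u α (u α - 1)) := by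
  ext β
  simp only [Finsupp.coe_tsub, Pi.sub_apply, Finsupp.equivFunOnFinite_symm_apply_apply,
    Finsupp.single_apply, Function.update]
  rcases eq_or_ne β α with h | h
  · simp [h]
  · simp [h, (Ne.symm h)]

lemma findex_mem (u : Fin q → ℕ) (α : Fin q) :
    α ∈ (Finsupp.equivFunOnFinite.symm u).support ↔ 1 ≤ u α := by
  simp [Finsupp.mem_support_iff, Nat.one_le_iff_ne_zero]

def Mmat (A : Fin q → Matrix (Fin n) (Fin n) ℝ) :
    Matrix (Fin n) (Fin n) (MvPolynomial (Fin q) ℝ) :=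
  1 + ∑ α, (X α : MvPolynomial (Fin q) ℝ) • (A α).map C

lemma gsigma_eq (A : Fin q → Matrix (Fin n) (Fin n) ℝ) (u : Fin q → ℕ) :
    gsigma A u = coeff (Finsupp.equivFunOnFinite.symm u) (Mmat A).det := rfl

lemma coeffM_mul (A : Fin q → Matrix (Fin n) (Fin n) ℝ)
    (N : Matrix (Fin n) (Fin n) (MvPolynomial (Fin q) ℝ)) (u : Fin q → ℕ) :
    (Matrix.of fun i j => coeff (Finsupp.equivFunOnFinite.symm u) ((Mmat A * N) i j)) =
      (Matrix.of fun i j => coeff (Finsupp.equivFunOnFinite.symm u) (N i j)) +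
      ∑ α, if 1 ≤ u α then
        A α * (Matrix.of fun i j => coeff (Finsupp.equivFunOnFinite.symm
          (Function.update u α (u α - 1))) (N i j)) else 0 := by
  ext i j
  have expand : (Mmat A * N) i j
      = N i j + ∑ α, ∑ k, (X α * (C (A α i k) * N k j)) := by
    simp only [Mmat, Matrix.mul_apply, Matrix.add_apply, Matrix.sum_apply, Matrix.one_apply,
      Matrix.smul_apply, Matrix.map_apply, smul_eq_mul, add_mul, Finset.sum_mul,
      Finset.sum_add_distrib, ite_mul, one_mul, zero_mul, Finset.sum_ite_eq, Finset.mem_univ,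
      if_true, mul_assoc]
    rw [Finset.sum_comm]
  rw [Matrix.of_apply, expand, coeff_add, coeff_sum, Matrix.add_apply, Matrix.of_apply]
  congr 1
  have : ∀ α : Fin q, coeff (Finsupp.equivFunOnFinite.symm u) (∑ k, (X α * (C (A α i k) * N k j)))
      = if 1 ≤ u α then ∑ k, A α i k * coeff (Finsupp.equivFunOnFinite.symm
          (Function.update u α (u α - 1))) (N k j) else 0 := by
    intro α
    rw [coeff_sum]
    by_cases h : 1 ≤ u α
    · rw [if_pos h]
      refine Finset.sum_congr rfl fun k _ => ?_
      rw [coeff_X_mul', if_pos ((findex_mem u α).2 h), findex, coeff_C_mul]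
    · rw [if_neg h]
      refine Finset.sum_eq_zero fun k _ => ?_
      rw [coeff_X_mul', if_neg]
      rw [findex_mem]; exact h
  rw [Finset.sum_congr rfl fun α _ => this α]
  rw [Matrix.sum_apply]
  refine Finset.sum_congr rfl fun α _ => ?_
  by_cases h : 1 ≤ u α
  · simp [h, Matrix.mul_apply]
  · simp [h]
lemma gsigma_zero (A : Fin q → Matrix (Fin n) (Fin n) ℝ) (u : Fin q → ℕ)
    (hu : ∀ i, u i = 0) : gsigma A u = 1 := by
  have h0 : Finsupp.equivFunOnFinite.symm u = 0 := by
    ext i; simp [hu i]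
  rw [gsigma_eq, h0]
  have : coeff (0 : (Fin q) →₀ ℕ) (Mmat A (n := n)).det
      = constantCoeff (Mmat A (n := n)).det := rfl
  rw [this, RingHom.map_det]
  have : (constantCoeff (σ := Fin q) (R := ℝ)).mapMatrix (Mmat A) = 1 := by
    ext i j
    simp [Mmat, Matrix.one_apply, Matrix.sum_apply, Matrix.smul_apply, Matrix.map_apply, smul_eq_mul, map_sum, constantCoeff_X, apply_ite]
  rw [this, Matrix.det_one]

lemma sum_update (u : Fin q → ℕ) (α : Fin q) (h : 1 ≤ u α) (k : ℕ)
    (hk : ∑ i, u i = k + 1) : ∑ i, Function.update u α (u α - 1) i = k := by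
  rw [Finset.sum_update_of_mem (Finset.mem_univ α), Finset.sdiff_singleton_eq_erase]
  rw [← Finset.add_sum_erase _ u (Finset.mem_univ α)] at hk
  omega

lemma coeffM_smul_one (d : MvPolynomial (Fin q) ℝ) (v : (Fin q) →₀ ℕ) :
    (Matrix.of fun i j => coeff v ((d • (1 : Matrix (Fin n) (Fin n) (MvPolynomial (Fin q) ℝ))) i j))
      = (coeff v d) • (1 : Matrix (Fin n) (Fin n) ℝ) := by
  ext i j
  simp [Matrix.one_apply, apply_ite (coeff v), mul_ite]

lemma coeffM_adjugate (A : Fin q → Matrix (Fin n) (Fin n) ℝ) :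
    ∀ (k : ℕ) (u : Fin q → ℕ), (∑ i, u i) = k →
    (Matrix.of fun i j => coeff (Finsupp.equivFunOnFinite.symm u) ((Mmat A).adjugate i j))
      = newtonAux A k u := by
  intro k
  induction k with
  | zero =>
    intro u hu
    have hu' : ∀ i, u i = 0 := by
      intro i
      have := Finset.sum_eq_zero_iff.1 hu i (Finset.mem_univ i)
      exact this
    have h := coeffM_mul A ((Mmat A).adjugate) u
    rw [Matrix.mul_adjugate, coeffM_smul_one] at h
    rw [← gsigma_eq] at h
    have hz : (∑ α, if 1 ≤ u α then
        A α * (Matrix.of fun i j => coeff (Finsupp.equivFunOnFinite.symm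
          (Function.update u α (u α - 1))) ((Mmat A).adjugate i j)) else 0) = 0 := by
      refine Finset.sum_eq_zero fun α _ => ?_
      rw [if_neg]; simp [hu' α]
    rw [hz, add_zero] at h
    rw [← h, gsigma_zero A u hu', one_smul, newtonAux]
  | succ k ih =>
    intro u hu
    have h := coeffM_mul A ((Mmat A).adjugate) u
    rw [Matrix.mul_adjugate, coeffM_smul_one, ← gsigma_eq] at h
    have hrec : (∑ α, if 1 ≤ u α then
        A α * (Matrix.of fun i j => coeff (Finsupp.equivFunOnFinite.symm
          (Function.update u α (u α - 1))) ((Mmat A).adjugate i j)) else 0) =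
        ∑ α, if 1 ≤ u α then
          A α * newtonAux A k (Function.update u α (u α - 1)) else 0 := by
      refine Finset.sum_congr rfl fun α _ => ?_
      by_cases hα : 1 ≤ u α
      · rw [if_pos hα, if_pos hα, ih _ (sum_update u α hα k hu)]
      · rw [if_neg hα, if_neg hα]
    rw [hrec] at h
    rw [newtonAux]
    exact eq_sub_of_add_eq h.symm

lemma coeffM_adjugate' (A : Fin q → Matrix (Fin n) (Fin n) ℝ) (u : Fin q → ℕ) :
    (Matrix.of fun i j => coeff (Finsupp.equivFunOnFinite.symm u) ((Mmat A).adjugate i j))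
      = newton A u :=
  coeffM_adjugate A (∑ i, u i) u rfl
def Lmat (B : Fin q → Matrix (Fin n) (Fin n) ℝ) :
    Matrix (Fin n) (Fin n) (MvPolynomial (Fin q) ℝ) :=
  ∑ α, (X α : MvPolynomial (Fin q) ℝ) • (B α).map C

lemma Mmat_affine (A B : Fin q → Matrix (Fin n) (Fin n) ℝ) (t : ℝ) :
    Mmat (n := n) (fun α => A α + t • B α) = Mmat A + t • Lmat B := by
  have key : ∀ α : Fin q, (X α : MvPolynomial (Fin q) ℝ) • (A α + t • B α).map C
      = ((X α : MvPolynomial (Fin q) ℝ) • (A α).map C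
        + t • ((X α : MvPolynomial (Fin q) ℝ) • (B α).map C)
          : Matrix (Fin n) (Fin n) (MvPolynomial (Fin q) ℝ)) := by
    intro α
    ext i j
    simp only [Matrix.map_apply, Matrix.smul_apply, Matrix.add_apply, smul_eq_mul,
      C_add, C_mul, smul_eq_C_mul]
    ring_nf
  simp only [Mmat, Lmat, key, Finset.sum_add_distrib, Finset.smul_sum]
  rw [add_assoc]

lemma det_updateRow_eq {S : Type*} [CommRing S] (M N : Matrix (Fin n) (Fin n) S) (j : Fin n) :
    (M.updateRow j (N j)).det = ∑ i, N j i * M.adjugate i j := by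
  rw [← Matrix.det_transpose, ← Matrix.updateCol_transpose, ← Matrix.cramer_apply]
  have hcr : ∀ i : Fin n, (Matrix.cramer Mᵀ) (fun k => if i = k then (1:S) else 0) j
      = M.adjugate i j := by
    intro i
    have harg : (fun k => if i = k then (1:S) else 0) = Pi.single i (1:S) := by
      funext k
      simp [Pi.single_apply, eq_comm]
    rw [Matrix.adjugate_def, Matrix.of_apply, harg]
  conv_lhs => rw [pi_eq_sum_univ (N j), map_sum, Finset.sum_apply]
  refine Finset.sum_congr rfl fun i _ => ?_
  rw [LinearMap.map_smul, Pi.smul_apply, hcr i, smul_eq_mul]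

lemma sum_det_updateRow {S : Type*} [CommRing S] (M N : Matrix (Fin n) (Fin n) S) :
    ∑ j, (M.updateRow j (N j)).det = (N * M.adjugate).trace := by
  rw [Matrix.trace]
  refine Finset.sum_congr rfl fun j _ => ?_
  rw [det_updateRow_eq, Matrix.diag_apply, Matrix.mul_apply]
lemma gsigma_affine (A B : Fin q → Matrix (Fin n) (Fin n) ℝ) (u : Fin q → ℕ) (t : ℝ) :
    gsigma (n := n) (fun α => A α + t • B α) u
      = ∑ s : Finset (Fin n), t ^ s.card *
          coeff (Finsupp.equivFunOnFinite.symm u)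
            (Matrix.detRowAlternating
              (s.piecewise (fun i => Lmat B i) (fun i => Mmat A i))) := by
  classical
  set L : Fin n → (Fin n → MvPolynomial (Fin q) ℝ) := fun i => Lmat B i with hL
  set M : Fin n → (Fin n → MvPolynomial (Fin q) ℝ) := fun i => Mmat A i with hM
  rw [gsigma_eq, Mmat_affine]
  have h0 : (Mmat A + t • Lmat B).det
      = Matrix.detRowAlternating ((fun i => t • L i) + M) := by
    congr 1
    funext i j
    simp [hL, hM, Matrix.add_apply, Matrix.smul_apply, add_comm]
  have hexp := (Matrix.detRowAlternating (R := MvPolynomial (Fin q) ℝ)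
      (n := Fin n)).toMultilinearMap.map_add_univ (fun i => t • L i) M
  simp only [AlternatingMap.coe_multilinearMap] at hexp
  rw [h0, hexp, coeff_sum]
  refine Finset.sum_congr rfl fun s _ => ?_
  have hvec : s.piecewise (fun i => t • L i) M
      = s.piecewise (fun i => (C t : MvPolynomial (Fin q) ℝ) • (s.piecewise L M) i)
          (s.piecewise L M) := by
    funext i
    by_cases hi : i ∈ s
    · rw [Finset.piecewise_eq_of_mem _ _ _ hi, Finset.piecewise_eq_of_mem _ _ _ hi,
        Finset.piecewise_eq_of_mem _ _ _ hi]
      funext j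
      simp [smul_eq_C_mul]
    · rw [Finset.piecewise_eq_of_notMem _ _ _ hi, Finset.piecewise_eq_of_notMem _ _ _ hi,
        Finset.piecewise_eq_of_notMem _ _ _ hi]
  have hsm := (Matrix.detRowAlternating (R := MvPolynomial (Fin q) ℝ)
      (n := Fin n)).toMultilinearMap.map_piecewise_smul
      (fun _ : Fin n => (C t : MvPolynomial (Fin q) ℝ)) (s.piecewise L M) s
  simp only [AlternatingMap.coe_multilinearMap] at hsm
  rw [hvec, hsm, Finset.prod_const, ← map_pow, smul_eq_mul, coeff_C_mul]

lemma hasDerivAt_gsigma_affine (A B : Fin q → Matrix (Fin n) (Fin n) ℝ) (u : Fin q → ℕ) :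
    HasDerivAt (fun t : ℝ => gsigma (n := n) (fun α => A α + t • B α) u)
      (coeff (Finsupp.equivFunOnFinite.symm u) ((Lmat B * (Mmat A).adjugate).trace)) 0 := by
  classical
  have hfun : (fun t : ℝ => gsigma (n := n) (fun α => A α + t • B α) u)
      = fun t => ∑ s : Finset (Fin n), t ^ s.card *
          coeff (Finsupp.equivFunOnFinite.symm u)
            (Matrix.detRowAlternating
              (s.piecewise (fun i => Lmat B i) (fun i => Mmat A i))) := by
    funext t; exact gsigma_affine A B u t
  set c : Finset (Fin n) → ℝ := fun s =>
    coeff (Finsupp.equivFunOnFinite.symm u)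
      (Matrix.detRowAlternating (s.piecewise (fun i => Lmat B i) (fun i => Mmat A i))) with hc
  rw [hfun]
  have hpow : ∀ (k : ℕ) (d : ℝ), HasDerivAt (fun t : ℝ => t ^ k * d)
      (if k = 1 then d else 0) 0 := by
    intro k d
    have h := (hasDerivAt_pow k (0:ℝ)).mul_const d
    refine h.congr_deriv ?_
    match k with
    | 0 => simp
    | 1 => simp
    | (m+2) => simp [zero_pow]
  have hsum := HasDerivAt.fun_sum (u := (Finset.univ : Finset (Finset (Fin n))))
    (fun s _ => hpow s.card (c s))
  refine hsum.congr_deriv ?_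
  have himg : Finset.univ.filter (fun s : Finset (Fin n) => s.card = 1)
      = Finset.univ.image (fun i : Fin n => ({i} : Finset (Fin n))) := by
    ext s
    simp [Finset.card_eq_one, eq_comm]
  have hsing : ∀ i : Fin n, c {i}
      = coeff (Finsupp.equivFunOnFinite.symm u) ((Mmat A).updateRow i (Lmat B i)).det := by
    intro i
    show coeff (Finsupp.equivFunOnFinite.symm u)
        (Matrix.detRowAlternating
          ((({i} : Finset (Fin n))).piecewise (fun i => Lmat B i) (fun i => Mmat A i))) = _
    rw [Finset.piecewise_singleton]
    rfl
  rw [← Finset.sum_filter, himg,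
    Finset.sum_image (fun a _ b _ h => Finset.singleton_injective h)]
  rw [Finset.sum_congr rfl fun i _ => hsing i, ← coeff_sum, sum_det_updateRow]
lemma coeff_trace (A B : Fin q → Matrix (Fin n) (Fin n) ℝ) (u : Fin q → ℕ) :
    coeff (Finsupp.equivFunOnFinite.symm u) ((Lmat B * (Mmat A).adjugate).trace)
      = ∑ α, if 1 ≤ u α then
          ((B α) * newton A (Function.update u α (u α - 1))).trace else 0 := by
  have hexp : (Lmat B * (Mmat A).adjugate).trace
      = ∑ α, ∑ j, ∑ i, (X α * (C (B α j i) * (Mmat A).adjugate i j)) := by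
    rw [Matrix.trace]
    have h1 : ∀ j : Fin n, (Lmat B * (Mmat A).adjugate).diag j
        = ∑ α, ∑ i, (X α * (C (B α j i) * (Mmat A).adjugate i j)) := by
      intro j
      rw [Matrix.diag_apply, Matrix.mul_apply]
      rw [show (∑ i, Lmat B j i * (Mmat A).adjugate i j)
          = ∑ i, ∑ α, (X α * (C (B α j i) * (Mmat A).adjugate i j)) from
        Finset.sum_congr rfl fun i _ => by
          simp [Lmat, Matrix.sum_apply, Matrix.smul_apply, Matrix.map_apply, smul_eq_mul,
            Finset.sum_mul, mul_assoc]]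
      exact Finset.sum_comm
    rw [Finset.sum_congr rfl fun j _ => h1 j]
    exact Finset.sum_comm
  rw [hexp, coeff_sum]
  refine Finset.sum_congr rfl fun α _ => ?_
  rw [coeff_sum]
  by_cases h : 1 ≤ u α
  · rw [if_pos h]
    have hT := coeffM_adjugate' A (Function.update u α (u α - 1))
    rw [Matrix.trace]
    have h2 : ∀ j : Fin n, ((B α) * newton A (Function.update u α (u α - 1))).diag j
        = ∑ i, B α j i * coeff (Finsupp.equivFunOnFinite.symm (Function.update u α (u α - 1)))
            ((Mmat A).adjugate i j) := by
      intro j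
      rw [Matrix.diag_apply, Matrix.mul_apply, ← hT]
      exact Finset.sum_congr rfl fun i _ => by rw [Matrix.of_apply]
    rw [Finset.sum_congr rfl fun j _ => h2 j]
    refine Finset.sum_congr rfl fun j _ => ?_
    rw [coeff_sum]
    refine Finset.sum_congr rfl fun i _ => ?_
    rw [coeff_X_mul', if_pos ((findex_mem u α).2 h), findex, coeff_C_mul]
  · rw [if_neg h]
    refine Finset.sum_eq_zero fun j _ => ?_
    rw [coeff_sum]
    refine Finset.sum_eq_zero fun i _ => ?_
    rw [coeff_X_mul', if_neg]
    rw [findex_mem]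
    exact h
lemma hasDerivAt_eval {σ : Type*} [Fintype σ] [DecidableEq σ] (g : ℝ → σ → ℝ) (g' : σ → ℝ)
    (t₀ : ℝ) (hg : ∀ s, HasDerivAt (fun t => g t s) (g' s) t₀) (p : MvPolynomial σ ℝ) :
    HasDerivAt (fun t => eval (g t) p) (∑ s, eval (g t₀) (pderiv s p) * g' s) t₀ := by
  induction p using MvPolynomial.induction_on with
  | C a =>
    have h0 : (∑ s : σ, eval (g t₀) (pderiv s (C a)) * g' s) = 0 := by
      simp [pderiv_C]
    rw [h0]
    simpa using hasDerivAt_const t₀ a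
  | add p r hp hr =>
    simpa only [map_add, add_mul, Finset.sum_add_distrib] using hp.fun_add hr
  | mul_X p s0 hp =>
    have h := hp.fun_mul (hg s0)
    have hfun : (fun t => eval (g t) p * g t s0) = fun t => eval (g t) (p * X s0) := by
      funext t; simp
    rw [hfun] at h
    have hder : (∑ s, eval (g t₀) (pderiv s p) * g' s) * g t₀ s0 + eval (g t₀) p * g' s0
        = ∑ s, eval (g t₀) (pderiv s (p * X s0)) * g' s := by
      simp only [pderiv_mul, map_add, eval_mul, eval_X, add_mul, Finset.sum_add_distrib,
        Finset.sum_mul]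
      congr 1
      · exact Finset.sum_congr rfl fun s _ => by ring
      · have hterm : ∀ s : σ, eval (g t₀) p * eval (g t₀) (pderiv s (X s0)) * g' s
            = if s = s0 then eval (g t₀) p * g' s0 else 0 := by
          intro s
          by_cases hs : s = s0
          · subst hs; simp
          · simp [pderiv_X_of_ne (Ne.symm hs), if_neg hs]
        rw [Finset.sum_congr rfl fun s _ => hterm s, Finset.sum_ite_eq' Finset.univ s0]
        simp
    rw [← hder]
    exact h
def UD (n q : ℕ) : MvPolynomial (Fin q) (MvPolynomial (Fin q × Fin n × Fin n) ℝ) :=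
  (1 + ∑ α, (X α : MvPolynomial (Fin q) (MvPolynomial (Fin q × Fin n × Fin n) ℝ)) •
    (Matrix.of fun i j => (X (α, i, j) : MvPolynomial (Fin q × Fin n × Fin n) ℝ)).map C).det

def sigmaPoly (n q : ℕ) (u : Fin q → ℕ) : MvPolynomial (Fin q × Fin n × Fin n) ℝ :=
  coeff (Finsupp.equivFunOnFinite.symm u) (UD n q)

lemma gsigma_eval (Bm : Fin q → Matrix (Fin n) (Fin n) ℝ) (u : Fin q → ℕ) :
    gsigma Bm u = eval (fun s : Fin q × Fin n × Fin n => Bm s.1 s.2.1 s.2.2)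
      (sigmaPoly n q u) := by
  set f := (eval (fun s : Fin q × Fin n × Fin n => Bm s.1 s.2.1 s.2.2) :
    MvPolynomial (Fin q × Fin n × Fin n) ℝ →+* ℝ) with hf
  have h1 : eval (fun s : Fin q × Fin n × Fin n => Bm s.1 s.2.1 s.2.2) (sigmaPoly n q u)
      = coeff (Finsupp.equivFunOnFinite.symm u) (MvPolynomial.map f (UD n q)) := by
    rw [coeff_map]; rfl
  have h2 : MvPolynomial.map f (UD n q) = (Mmat Bm).det := by
    rw [UD, RingHom.map_det]
    congr 1
    ext i j
    simp [Mmat, RingHom.mapMatrix_apply, Matrix.map_apply, Matrix.add_apply, Matrix.one_apply,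
      Matrix.sum_apply, Matrix.smul_apply, smul_eq_mul, map_add, map_sum, _root_.map_mul,
      apply_ite (⇑(MvPolynomial.map f)), hf]
  rw [h1, h2, gsigma_eq]

end DS


end
theorem deriv_sigma {n q : ℕ} (A : ℝ → Fin q → Matrix (Fin n) (Fin n) ℝ)
    (hA : ∀ α i j, Differentiable ℝ (fun t => A t α i j)) (u : Fin q → ℕ) :
    deriv (fun t => gsigma (A t) u) 0 =
      ∑ α, if 1 ≤ u α then
          ((Matrix.of fun i j => deriv (fun t => A t α i j) 0) *
            newton (A 0) (Function.update u α (u α - 1))).trace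
        else 0 := by
  classical
  open DS in
  set B : Fin q → Matrix (Fin n) (Fin n) ℝ :=
    fun α => Matrix.of fun i j => deriv (fun t => A t α i j) 0 with hB
  set e : (Fin q × Fin n × Fin n) → ℝ := fun s => A 0 s.1 s.2.1 s.2.2 with he
  set b : (Fin q × Fin n × Fin n) → ℝ := fun s => B s.1 s.2.1 s.2.2 with hb
  have hg : ∀ s : Fin q × Fin n × Fin n,
      HasDerivAt (fun t => A t s.1 s.2.1 s.2.2) (b s) 0 := fun s =>
    ((hA s.1 s.2.1 s.2.2) 0).hasDerivAt
  have h1 : HasDerivAt (fun t => gsigma (A t) u)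
      (∑ s, eval e (pderiv s (sigmaPoly n q u)) * b s) 0 := by
    have h := hasDerivAt_eval (fun t s => A t s.1 s.2.1 s.2.2) b 0 hg (sigmaPoly n q u)
    have hfun : (fun t => eval (fun s : Fin q × Fin n × Fin n => A t s.1 s.2.1 s.2.2)
        (sigmaPoly n q u)) = fun t => gsigma (A t) u := by
      funext t; exact (gsigma_eval (A t) u).symm
    rw [hfun] at h
    exact h
  have hg2 : ∀ s : Fin q × Fin n × Fin n,
      HasDerivAt (fun t : ℝ => e s + t * b s) (b s) 0 := by
    intro s
    simpa using (hasDerivAt_id (0:ℝ)).mul_const (b s) |>.const_add (e s)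
  have h2 : HasDerivAt (fun t : ℝ => gsigma (fun α => A 0 α + t • B α) u)
      (∑ s, eval e (pderiv s (sigmaPoly n q u)) * b s) 0 := by
    have h := hasDerivAt_eval (fun (t : ℝ) s => e s + t * b s) b 0 hg2 (sigmaPoly n q u)
    have hfun : (fun t : ℝ => eval (fun s : Fin q × Fin n × Fin n => e s + t * b s)
        (sigmaPoly n q u)) = fun t : ℝ => gsigma (fun α => A 0 α + t • B α) u := by
      funext t
      rw [gsigma_eval (fun α => A 0 α + t • B α) u]
      congr 1
    have he0 : (fun s : Fin q × Fin n × Fin n => e s + (0:ℝ) * b s) = e := by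
      funext s; simp
    rw [hfun, he0] at h
    exact h
  rw [h1.deriv, h2.unique (hasDerivAt_gsigma_affine (A 0) B u), coeff_trace]
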